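/- arXiv:2306.06813 — 4 statements merged into one kernel-verified Lean document; each statement's English description precedes it below -/
import Mathlib

section
/- For any nonzero vector g in R^m and any p with 0 < p < ∞, the ratio ‖g‖_{p+2}^{p+2} / (‖g‖_p^p · ‖g‖_2^2) is at least 1/m, with equality if and only if all nonzero coordinates of g have equal absolute value and g has no zero coordinates (i.e., g is a constant multiple of a vector with all entries of absolute value 1). -/
open Finset

/-- For nonzero `g : ℝ^m` and `0 < p`,
`‖g‖_{p+2}^{p+2} / (‖g‖_p^p · ‖g‖_2^2) ≥ 1/m`, with equality iff all coordinates
of `g` have the same (nonzero) absolute value. -/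
theorem stmt2 (m : ℕ) (p : ℝ) (hp : 0 < p) (g : Fin m → ℝ) (hg : g ≠ 0) :
    (1 : ℝ) / m ≤
      (∑ i, |g i| ^ (p + 2)) / ((∑ i, |g i| ^ p) * (∑ i, g i ^ 2)) ∧
    ((∑ i, |g i| ^ (p + 2)) / ((∑ i, |g i| ^ p) * (∑ i, g i ^ 2)) = 1 / m ↔
      ∃ c : ℝ, 0 < c ∧ ∀ i, |g i| = c) := by
  set a : Fin m → ℝ := fun i => |g i| with ha
  have ha0 : ∀ i, 0 ≤ a i := fun i => abs_nonneg _
  obtain ⟨k, hk⟩ : ∃ k, g k ≠ 0 := by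
    by_contra h; push_neg at h; exact hg (funext h)
  have hak : 0 < a k := abs_pos.mpr hk
  have hm : 0 < (m : ℝ) := by exact_mod_cast k.pos
  have hsq : ∀ i, g i ^ 2 = a i ^ 2 := fun i => (sq_abs _).symm
  have hpw : ∀ x : ℝ, 0 ≤ x → x ^ (p + 2) = x ^ p * x ^ (2 : ℕ) := by
    intro x hx
    rw [show x ^ (2 : ℕ) = x ^ ((2 : ℕ) : ℝ) from (Real.rpow_natCast x 2).symm,
      ← Real.rpow_add' hx (by linarith)]
    norm_num
  have hC : 0 < ∑ i, g i ^ 2 := by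
    apply Finset.sum_pos' (fun i _ => sq_nonneg _)
    exact ⟨k, mem_univ k, by positivity⟩
  have hB : 0 < ∑ i, a i ^ p := by
    apply Finset.sum_pos' (fun i _ => Real.rpow_nonneg (ha0 i) p)
    exact ⟨k, mem_univ k, Real.rpow_pos_of_pos hak p⟩
  set A := ∑ i, a i ^ (p + 2) with hA
  set B := ∑ i, a i ^ p with hBdef
  set C := ∑ i, g i ^ 2 with hCdef
  set T := ∑ i, ∑ j, (a i ^ p - a j ^ p) * (a i ^ (2:ℕ) - a j ^ (2:ℕ)) with hT
  have expand : ∀ i j, (a i ^ p - a j ^ p) * (a i ^ (2:ℕ) - a j ^ (2:ℕ)) =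
      (a i ^ (p + 2) + a j ^ (p + 2)) - (a i ^ p * a j ^ (2:ℕ) + a j ^ p * a i ^ (2:ℕ)) := by
    intro i j; rw [hpw _ (ha0 i), hpw _ (ha0 j)]; ring
  have hCa : C = ∑ i, a i ^ (2:ℕ) := by
    rw [hCdef]; exact Finset.sum_congr rfl fun i _ => hsq i
  have key : T = 2 * ((m : ℝ) * A - B * C) := by
    rw [hT]
    simp only [expand, Finset.sum_sub_distrib, Finset.sum_add_distrib,
      Finset.sum_const, card_univ, Fintype.card_fin, nsmul_eq_mul,
      ← Finset.sum_mul, ← Finset.mul_sum]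
    rw [hCa, ← hA, ← hBdef]
    ring
  have hterm : ∀ x y : ℝ, 0 ≤ x → 0 ≤ y →
      0 ≤ (x ^ p - y ^ p) * (x ^ (2:ℕ) - y ^ (2:ℕ)) := by
    intro x y hx hy
    rcases le_total x y with h | h
    · have h1 : x ^ p ≤ y ^ p := Real.rpow_le_rpow hx h hp.le
      have h2 : x ^ (2:ℕ) ≤ y ^ (2:ℕ) := pow_le_pow_left₀ hx h 2
      nlinarith
    · have h1 : y ^ p ≤ x ^ p := Real.rpow_le_rpow hy h hp.le
      have h2 : y ^ (2:ℕ) ≤ x ^ (2:ℕ) := pow_le_pow_left₀ hy h 2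
      nlinarith
  have hstrict : ∀ x y : ℝ, 0 ≤ x → 0 ≤ y → x ≠ y →
      0 < (x ^ p - y ^ p) * (x ^ (2:ℕ) - y ^ (2:ℕ)) := by
    intro x y hx hy hne
    rcases lt_or_gt_of_ne hne with h | h
    · have h1 : x ^ p < y ^ p := Real.rpow_lt_rpow hx h hp
      have h2 : x ^ (2:ℕ) < y ^ (2:ℕ) := by nlinarith
      nlinarith
    · have h1 : y ^ p < x ^ p := Real.rpow_lt_rpow hy h hp
      have h2 : y ^ (2:ℕ) < x ^ (2:ℕ) := by nlinarith
      nlinarith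
  have hT0 : 0 ≤ T := by
    apply Finset.sum_nonneg; intro i _
    exact Finset.sum_nonneg fun j _ => hterm _ _ (ha0 i) (ha0 j)
  have hBC : B * C ≤ (m : ℝ) * A := by nlinarith [key, hT0]
  have hBCpos : 0 < B * C := mul_pos hB hC
  constructor
  · rw [div_le_div_iff₀ hm hBCpos]
    linarith
  · rw [div_eq_div_iff hBCpos.ne' hm.ne']
    constructor
    · intro heq
      have hTz : T = 0 := by nlinarith [key]
      have hallz : ∀ i ∈ univ, ∀ j ∈ univ,
          (a i ^ p - a j ^ p) * (a i ^ (2:ℕ) - a j ^ (2:ℕ)) = 0 := by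
        intro i _ j hj
        have h1 := (Finset.sum_eq_zero_iff_of_nonneg
          (fun i _ => Finset.sum_nonneg fun j _ => hterm _ _ (ha0 i) (ha0 j))).mp hTz i (mem_univ i)
        exact (Finset.sum_eq_zero_iff_of_nonneg
          (fun j _ => hterm _ _ (ha0 i) (ha0 j))).mp h1 j hj
      refine ⟨a k, hak, fun i => ?_⟩
      by_contra hne
      exact absurd (hallz i (mem_univ i) k (mem_univ k)) (ne_of_gt (hstrict _ _ (ha0 i) (ha0 k) hne))
    · rintro ⟨c, hc, hcall⟩
      have hTz : T = 0 := by
        rw [hT]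
        apply Finset.sum_eq_zero; intro i _
        apply Finset.sum_eq_zero; intro j _
        have : a i = a j := by rw [show a i = |g i| from rfl, hcall i, ← hcall j]
        rw [this]; ring
      nlinarith [key]
end

section
/- Let d_1, ..., d_n ≥ 0 be nonnegative reals. Then the function f(x) = (∑_{i=1}^n e^{d_i(x+2)}) / (∑_{i=1}^n e^{d_i x}) is monotonically nondecreasing on (0, ∞). -/
open Finset

lemma pair_ineq (a b x y : ℝ) (hxy : x ≤ y) :
    Real.exp (a * (x + 2)) * Real.exp (b * y) + Real.exp (b * (x + 2)) * Real.exp (a * y)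
      ≤ Real.exp (a * (y + 2)) * Real.exp (b * x) + Real.exp (b * (y + 2)) * Real.exp (a * x) := by
  rw [← Real.exp_add, ← Real.exp_add, ← Real.exp_add, ← Real.exp_add]
  have e1 : a * (x + 2) + b * y = (a * x + b * y) + 2 * a := by ring
  have e2 : b * (x + 2) + a * y = (b * x + a * y) + 2 * b := by ring
  have e3 : a * (y + 2) + b * x = (b * x + a * y) + 2 * a := by ring
  have e4 : b * (y + 2) + a * x = (a * x + b * y) + 2 * b := by ring
  rw [e1, e2, e3, e4]
  have key : 0 ≤ (Real.exp (b * x + a * y) - Real.exp (a * x + b * y)) *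
      (Real.exp (2 * a) - Real.exp (2 * b)) := by
    rcases le_total a b with hab | hab
    · have h1 : Real.exp (b * x + a * y) ≤ Real.exp (a * x + b * y) :=
        Real.exp_le_exp.2 (by nlinarith)
      have h2 : Real.exp (2 * a) ≤ Real.exp (2 * b) :=
        Real.exp_le_exp.2 (by linarith)
      nlinarith
    · have h1 : Real.exp (a * x + b * y) ≤ Real.exp (b * x + a * y) :=
        Real.exp_le_exp.2 (by nlinarith)
      have h2 : Real.exp (2 * b) ≤ Real.exp (2 * a) :=
        Real.exp_le_exp.2 (by linarith)
      nlinarith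
  nlinarith [Real.exp_add (a * x + b * y) (2 * a), Real.exp_add (b * x + a * y) (2 * b),
    Real.exp_add (b * x + a * y) (2 * a), Real.exp_add (a * x + b * y) (2 * b)]

/-- For nonnegative `d_1,…,d_n`, the function
`x ↦ (∑ i, e^{d_i(x+2)}) / (∑ i, e^{d_i x})` is monotonically nondecreasing on `(0,∞)`. -/
theorem stmt3 (n : ℕ) (d : Fin n → ℝ) (hd : ∀ i, 0 ≤ d i) :
    MonotoneOn
      (fun x : ℝ => (∑ i, Real.exp (d i * (x + 2))) / (∑ i, Real.exp (d i * x)))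
      (Set.Ioi (0 : ℝ)) := by
  intro x hx y hy hxy
  simp only [Set.mem_Ioi] at hx hy
  rcases Nat.eq_zero_or_pos n with h0 | hn
  · subst h0; simp
  have : Nonempty (Fin n) := ⟨⟨0, hn⟩⟩
  have hSx : 0 < ∑ i, Real.exp (d i * x) :=
    Finset.sum_pos (fun i _ => Real.exp_pos _) Finset.univ_nonempty
  have hSy : 0 < ∑ i, Real.exp (d i * y) :=
    Finset.sum_pos (fun i _ => Real.exp_pos _) Finset.univ_nonempty
  simp only
  rw [div_le_div_iff₀ hSx hSy]
  rw [Finset.sum_mul_sum, Finset.sum_mul_sum]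
  set F : Fin n → Fin n → ℝ := fun i j => Real.exp (d i * (x + 2)) * Real.exp (d j * y) with hF
  set G : Fin n → Fin n → ℝ := fun i j => Real.exp (d i * (y + 2)) * Real.exp (d j * x) with hG
  have key : ∀ i j : Fin n, F i j + F j i ≤ G i j + G j i := fun i j =>
    pair_ineq (d i) (d j) x y hxy
  have h1 : (∑ i, ∑ j, (F i j + F j i)) ≤ ∑ i, ∑ j, (G i j + G j i) :=
    Finset.sum_le_sum fun i _ => Finset.sum_le_sum fun j _ => key i j
  have hFs : ∑ i, ∑ j, (F i j + F j i) = (∑ i, ∑ j, F i j) + (∑ i, ∑ j, F j i) := by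
    simp [Finset.sum_add_distrib]
  have hGs : ∑ i, ∑ j, (G i j + G j i) = (∑ i, ∑ j, G i j) + (∑ i, ∑ j, G j i) := by
    simp [Finset.sum_add_distrib]
  have hFc : ∑ i, ∑ j, F j i = ∑ i, ∑ j, F i j := Finset.sum_comm
  have hGc : ∑ i, ∑ j, G j i = ∑ i, ∑ j, G i j := Finset.sum_comm
  rw [hFs, hFc, hGs, hGc] at h1
  linarith
end

section
/- For nonnegative reals d_1, ..., d_n and any x > 0, the double sum ∑_{i=1}^n ∑_{j=1}^n (d_i - d_j) e^{2 d_i} e^{(d_i + d_j) x} is nonnegative. -/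
open Finset

/-- For nonnegative `d_1,…,d_n` and `x > 0`,
`∑ i ∑ j (d_i − d_j) e^{2 d_i} e^{(d_i + d_j) x} ≥ 0`. -/
theorem stmt4 (n : ℕ) (d : Fin n → ℝ) (hd : ∀ i, 0 ≤ d i) (x : ℝ) (hx : 0 < x) :
    0 ≤ ∑ i, ∑ j, (d i - d j) * Real.exp (2 * d i) * Real.exp ((d i + d j) * x) := by
  have hswap : ∑ i, ∑ j, (d i - d j) * Real.exp (2 * d i) * Real.exp ((d i + d j) * x)
      = ∑ i, ∑ j, (d j - d i) * Real.exp (2 * d j) * Real.exp ((d i + d j) * x) := by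
    rw [Finset.sum_comm]
    congr 1; ext i; congr 1; ext j; ring_nf
  have h2 : 0 ≤ 2 * ∑ i, ∑ j, (d i - d j) * Real.exp (2 * d i) * Real.exp ((d i + d j) * x) := by
    have : 2 * ∑ i, ∑ j, (d i - d j) * Real.exp (2 * d i) * Real.exp ((d i + d j) * x)
        = ∑ i, ∑ j, (d i - d j) * (Real.exp (2 * d i) - Real.exp (2 * d j)) *
            Real.exp ((d i + d j) * x) := by
      rw [two_mul]
      nth_rewrite 2 [hswap]
      rw [← Finset.sum_add_distrib]
      congr 1; ext i
      rw [← Finset.sum_add_distrib]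
      congr 1; ext j; ring
    rw [this]
    apply Finset.sum_nonneg; intro i _
    apply Finset.sum_nonneg; intro j _
    apply mul_nonneg _ (Real.exp_pos _).le
    rcases le_total (d i) (d j) with h | h
    · exact mul_nonneg_iff.2 (Or.inr ⟨by linarith, by simpa using Real.exp_le_exp.2 (by linarith)⟩)
    · exact mul_nonneg (by linarith) (by simpa using Real.exp_le_exp.2 (by linarith))
  linarith
end

section
/- Let f: R^n → R be α-strongly convex, a ∈ R^n nonzero, β ∈ R, and let H = {x : ⟨a,x⟩ = β}. Let x ∈ R^n, x* ∈ ∂f(x), and let t̂ minimize t ↦ f*(x* − a t) + tβ over R. Set z* = x* − t̂ a and z = ∇f*(z*). Then z ∈ H and for all y ∈ H: D_f^{z*}(z, y) ≤ D_f^{x*}(x, y) − (α/2)·(⟨a,x⟩ − β)^2/‖a‖_2^2. -/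
open scoped RealInnerProductSpace

/-- Bregman projection onto a hyperplane: with `f` `α`-strongly convex, `a ≠ 0`,
`t̂` minimizing `t ↦ f*(x* − t a) + t β`, `z* = x* − t̂ a` and `z = ∇f*(z*)`
(equivalently `z* ∈ ∂f(z)`), the point `z` lies on `H(a, β)` and for every
`y ∈ H(a, β)` we have
`D_f^{z*}(z,y) ≤ D_f^{x*}(x,y) − (α/2)(⟨a,x⟩ − β)²/‖a‖²`. -/
theorem stmt12 (n : ℕ) (α : ℝ) (hα : 0 < α) (f : EuclideanSpace ℝ (Fin n) → ℝ)
    (hsc : ∀ x y g : EuclideanSpace ℝ (Fin n),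
      (∀ z, f x + ⟪g, z - x⟫ ≤ f z) →
        f x + ⟪g, y - x⟫ + α / 2 * ‖y - x‖ ^ 2 ≤ f y)
    (fstar : EuclideanSpace ℝ (Fin n) → ℝ)
    (hfstar : ∀ y, fstar y = sSup (Set.range fun u => ⟪y, u⟫ - f u))
    (a : EuclideanSpace ℝ (Fin n)) (ha : a ≠ 0) (β : ℝ)
    (x xs : EuclideanSpace ℝ (Fin n))
    (hxs : ∀ z, f x + ⟪xs, z - x⟫ ≤ f z)
    (that : ℝ)
    (hthat : ∀ t : ℝ, fstar (xs - that • a) + that * β ≤ fstar (xs - t • a) + t * β)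
    (z zs : EuclideanSpace ℝ (Fin n)) (hzs : zs = xs - that • a)
    (hz : ∀ u, f z + ⟪zs, u - z⟫ ≤ f u) :
    ⟪a, z⟫ = β ∧
    ∀ y : EuclideanSpace ℝ (Fin n), ⟪a, y⟫ = β →
      f y - f z - ⟪zs, y - z⟫ ≤
        f y - f x - ⟪xs, y - x⟫ - α / 2 * (⟪a, x⟫ - β) ^ 2 / ‖a‖ ^ 2 := by
  have hna : (0:ℝ) < ‖a‖ ^ 2 := pow_pos (norm_pos_iff.mpr ha) 2
  -- quadratic upper bound on each conjugate term, from strong convexity at z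
  have key : ∀ w u : EuclideanSpace ℝ (Fin n),
      ⟪w, u⟫ - f u ≤ ⟪w, z⟫ - f z + ‖w - zs‖ ^ 2 / (2 * α) := by
    intro w u
    have h1 := hsc z u zs hz
    have h2 : ⟪w - zs, u - z⟫ ≤ ‖w - zs‖ * ‖u - z‖ := real_inner_le_norm _ _
    have e1 : ⟪w - zs, u - z⟫ = ⟪w, u⟫ - ⟪w, z⟫ - ⟪zs, u⟫ + ⟪zs, z⟫ := by
      rw [inner_sub_left, inner_sub_right, inner_sub_right]; ring
    have e2 : ⟪zs, u - z⟫ = ⟪zs, u⟫ - ⟪zs, z⟫ := inner_sub_right _ _ _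
    have h3 : ‖w - zs‖ * ‖u - z‖ - α / 2 * ‖u - z‖ ^ 2 ≤ ‖w - zs‖ ^ 2 / (2 * α) := by
      rw [le_div_iff₀ (by positivity : (0:ℝ) < 2 * α)]
      nlinarith [sq_nonneg (α * ‖u - z‖ - ‖w - zs‖)]
    linarith [e1 ▸ h2]
  have fstar_le : ∀ w : EuclideanSpace ℝ (Fin n),
      fstar w ≤ ⟪w, z⟫ - f z + ‖w - zs‖ ^ 2 / (2 * α) := by
    intro w
    rw [hfstar]
    apply csSup_le (Set.range_nonempty _)
    rintro v ⟨u, rfl⟩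
    exact key w u
  have bdd : BddAbove (Set.range fun u => ⟪zs, u⟫ - f u) :=
    ⟨⟪zs, z⟫ - f z + ‖zs - zs‖ ^ 2 / (2 * α), by rintro v ⟨u, rfl⟩; exact key zs u⟩
  have hfzs : fstar zs = ⟪zs, z⟫ - f z := by
    refine le_antisymm ?_ ?_
    · have := fstar_le zs
      simpa using this
    · rw [hfstar]
      exact le_csSup bdd ⟨z, rfl⟩
  -- z lies on the hyperplane
  have hzH : ⟪a, z⟫ = β := by
    obtain ⟨s, hs⟩ : ∃ s : ℝ, s = α * (⟪a, z⟫ - β) / ‖a‖ ^ 2 := ⟨_, rfl⟩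
    have ht := hthat (that + s)
    have hw : xs - (that + s) • a = zs - s • a := by
      rw [hzs, add_smul]; abel
    rw [hw, ← hzs, hfzs] at ht
    have hb := fstar_le (zs - s • a)
    have e1 : ⟪zs - s • a, z⟫ = ⟪zs, z⟫ - s * ⟪a, z⟫ := by
      rw [inner_sub_left, real_inner_smul_left]
    have e2 : ‖(zs - s • a) - zs‖ ^ 2 = s ^ 2 * ‖a‖ ^ 2 := by
      have h4 : (zs - s • a) - zs = -(s • a) := by abel
      rw [h4, norm_neg, norm_smul]
      rw [mul_pow, Real.norm_eq_abs, sq_abs]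
    rw [e1, e2] at hb
    have h0 : 0 ≤ -s * (⟪a, z⟫ - β) + s ^ 2 * ‖a‖ ^ 2 / (2 * α) := by nlinarith [ht, hb]
    have hnane : (‖a‖:ℝ) ^ 2 ≠ 0 := ne_of_gt hna
    have hsN : s * ‖a‖ ^ 2 = α * (⟪a, z⟫ - β) := by
      rw [hs, div_mul_cancel₀ _ hnane]
    have h0' : 0 ≤ -2 * α * s * (⟪a, z⟫ - β) + s ^ 2 * ‖a‖ ^ 2 := by
      have hmul := mul_nonneg h0 (le_of_lt (by positivity : (0:ℝ) < 2 * α))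
      have ecan : s ^ 2 * ‖a‖ ^ 2 / (2 * α) * (2 * α) = s ^ 2 * ‖a‖ ^ 2 :=
        div_mul_cancel₀ _ (by positivity)
      nlinarith [hmul, ecan]
    have hA : 0 ≤ -(α ^ 2) * (⟪a, z⟫ - β) ^ 2 := by
      calc (0:ℝ) ≤ (-2 * α * s * (⟪a, z⟫ - β) + s ^ 2 * ‖a‖ ^ 2) * ‖a‖ ^ 2 :=
            mul_nonneg h0' (le_of_lt hna)
        _ = -2 * α * (s * ‖a‖ ^ 2) * (⟪a, z⟫ - β) + (s * ‖a‖ ^ 2) ^ 2 := by ring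
        _ = -2 * α * (α * (⟪a, z⟫ - β)) * (⟪a, z⟫ - β) + (α * (⟪a, z⟫ - β)) ^ 2 := by
            rw [hsN]
        _ = -(α ^ 2) * (⟪a, z⟫ - β) ^ 2 := by ring
    have hc2 : (⟪a, z⟫ - β) ^ 2 ≤ 0 := by nlinarith [hA, mul_pos hα hα]
    have hc0 : (⟪a, z⟫ - β) ^ 2 = 0 := le_antisymm hc2 (sq_nonneg _)
    have := sq_eq_zero_iff.mp hc0
    linarith [this]
  refine ⟨hzH, ?_⟩
  intro y hy
  have h1 := hsc x z xs hxs
  -- Cauchy–Schwarz: (⟪a,x⟫ - β)^2 ≤ ‖a‖^2 * ‖z - x‖^2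
  have hcs : (⟪a, x⟫ - β) ^ 2 ≤ ‖a‖ ^ 2 * ‖z - x‖ ^ 2 := by
    have h2 : ⟪a, z - x⟫ = β - ⟪a, x⟫ := by
      rw [inner_sub_right, hzH]
    have h3 := real_inner_mul_inner_self_le a (z - x)
    have h4 : ⟪a, a⟫ = ‖a‖ ^ 2 := real_inner_self_eq_norm_sq a
    have h5 : ⟪z - x, z - x⟫ = ‖z - x‖ ^ 2 := real_inner_self_eq_norm_sq _
    have h2sq : ⟪a, z - x⟫ ^ 2 = (β - ⟪a, x⟫) ^ 2 := by rw [h2]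
    nlinarith [h2sq, h3, h4, h5]
  have hdiv : α / 2 * (⟪a, x⟫ - β) ^ 2 / ‖a‖ ^ 2 ≤ α / 2 * ‖z - x‖ ^ 2 := by
    rw [div_le_iff₀ hna]
    nlinarith [hcs, hα]
  have e3 : ⟪zs, y - z⟫ = ⟪xs, y - z⟫ := by
    rw [hzs]
    have h5 : ⟪a, y - z⟫ = 0 := by rw [inner_sub_right, hy, hzH]; ring
    rw [inner_sub_left, real_inner_smul_left, h5]; ring
  have e4 : ⟪xs, y - x⟫ - ⟪xs, y - z⟫ = ⟪xs, z - x⟫ := by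
    rw [inner_sub_right, inner_sub_right, inner_sub_right]; ring
  linarith [h1, hdiv, e3 ▸ e4]
end
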